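/- arXiv:1001.2821 — 4 statements merged into one kernel-verified Lean document; each statement's English description precedes it below -/
import Mathlib

section
/- Let ψ : [0,∞] → [0,∞] be a sense-reversing homeomorphism and φ : [0,∞] → [0,∞] a non-decreasing function. Then the generalized inverse of the composite satisfies (φ∘ψ)⁻¹(τ) ≤ ψ⁻¹(φ⁻¹(τ)) for all τ ∈ [0,∞]. -/
open ENNReal

/-- Generalized inverse of a non-decreasing function: `g⁻¹(τ) = inf { t : g(t) ≥ τ }`. -/
noncomputable def incInv (g : ℝ≥0∞ → ℝ≥0∞) (τ : ℝ≥0∞) : ℝ≥0∞ :=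
  sInf {t | τ ≤ g t}

/-- Generalized inverse of a non-increasing function: `h⁻¹(τ) = inf { t : h(t) ≤ τ }`. -/
noncomputable def decInv (h : ℝ≥0∞ → ℝ≥0∞) (τ : ℝ≥0∞) : ℝ≥0∞ :=
  sInf {t | h t ≤ τ}

/-- Let `ψ : [0,∞] → [0,∞]` be a sense-reversing homeomorphism (order-reversing
bijection with inverse `ψinv`) and `φ` a non-decreasing function.  Then `φ ∘ ψ` is
non-increasing and its generalized inverse satisfies
`(φ∘ψ)⁻¹(τ) ≤ ψ⁻¹(φ⁻¹(τ))` for all `τ`. -/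
theorem stmt2 (ψ ψinv φ : ℝ≥0∞ → ℝ≥0∞)
    (hψ : StrictAnti ψ) (hψbij : Function.Bijective ψ)
    (hψc : Continuous ψ) (hψinvc : Continuous ψinv)
    (hleft : Function.LeftInverse ψinv ψ) (hright : Function.RightInverse ψinv ψ)
    (hφ : Monotone φ) (τ : ℝ≥0∞) :
    decInv (fun t => φ (ψ t)) τ ≤ ψinv (incInv φ τ) := by
  refine le_of_forall_gt_imp_ge_of_dense fun b hb => ?_
  have hψb : ψ b < incInv φ τ := by
    have := hψ hb
    rwa [hright] at this
  have hmem : ψ b ∉ {s | τ ≤ φ s} := fun hs => (not_lt.2 (sInf_le hs)) hψb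
  have hb' : φ (ψ b) ≤ τ := le_of_lt (lt_of_not_ge hmem)
  exact sInf_le hb'
end

section
/- Let φ : [0,∞] → [0,∞] be a strictly monotone function and ψ : [0,∞] → [0,∞] a sense-reversing homeomorphism. Then the generalized inverse of φ∘ψ equals ψ⁻¹ ∘ φ⁻¹ everywhere on [0,∞]. -/
open ENNReal

lemma invSupInf (ψ ψinv : ℝ≥0∞ → ℝ≥0∞) (hψ : StrictAnti ψ)
    (hleft : Function.LeftInverse ψinv ψ) (hright : Function.RightInverse ψinv ψ)
    (C : Set ℝ≥0∞) : sInf (ψ ⁻¹' C) = ψinv (sSup C) := by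
  have hinv : Antitone ψinv := by
    intro a b hab
    by_contra h
    push_neg at h
    have h2 := hψ h
    rw [hright, hright] at h2
    exact absurd hab (not_le_of_gt h2)
  apply le_antisymm
  · have h1 : ∀ c ∈ C, c ≤ ψ (sInf (ψ ⁻¹' C)) := by
      intro c hc
      have ht : ψinv c ∈ ψ ⁻¹' C := by
        simp only [Set.mem_preimage, hright c]; exact hc
      calc c = ψ (ψinv c) := (hright c).symm
        _ ≤ ψ (sInf (ψ ⁻¹' C)) := hψ.antitone (sInf_le ht)
    have h2 : sSup C ≤ ψ (sInf (ψ ⁻¹' C)) := sSup_le h1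
    have h3 := hinv h2
    rwa [hleft] at h3
  · apply le_sInf
    intro t ht
    have h1 : ψ t ≤ sSup C := le_sSup ht
    have h2 := hinv h1
    rwa [hleft] at h2

lemma supInfMono (φ : ℝ≥0∞ → ℝ≥0∞) (hφ : StrictMono φ) (τ : ℝ≥0∞) :
    sSup {s | φ s ≤ τ} = sInf {s | τ ≤ φ s} := by
  apply le_antisymm
  · apply sSup_le
    intro c hc
    by_contra h
    push_neg at h
    obtain ⟨s, hs, hsc⟩ := sInf_lt_iff.mp h
    exact absurd hc (not_le_of_gt (lt_of_le_of_lt hs (hφ hsc)))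
  · by_contra h
    push_neg at h
    obtain ⟨x, hx1, hx2⟩ := exists_between h
    have hxA : x ∉ {s | τ ≤ φ s} := fun hx => absurd (sInf_le hx) (not_le_of_gt hx2)
    have hxC : x ∈ {s | φ s ≤ τ} := show φ x ≤ τ from le_of_lt (lt_of_not_ge hxA)
    exact absurd (le_sSup hxC) (not_le_of_gt hx1)

lemma supInfAnti (φ : ℝ≥0∞ → ℝ≥0∞) (hφ : StrictAnti φ) (τ : ℝ≥0∞) :
    sSup {s | τ ≤ φ s} = sInf {s | φ s ≤ τ} := by
  apply le_antisymm
  · apply sSup_le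
    intro c hc
    by_contra h
    push_neg at h
    obtain ⟨s, hs, hsc⟩ := sInf_lt_iff.mp h
    exact absurd hs (not_le_of_gt (lt_of_le_of_lt hc (hφ hsc)))
  · by_contra h
    push_neg at h
    obtain ⟨x, hx1, hx2⟩ := exists_between h
    have hxA : x ∉ {s | φ s ≤ τ} := fun hx => absurd (sInf_le hx) (not_le_of_gt hx2)
    have hxC : x ∈ {s | τ ≤ φ s} := show τ ≤ φ x from le_of_lt (lt_of_not_ge hxA)
    exact absurd (le_sSup hxC) (not_le_of_gt hx1)

/-- Let `φ : [0,∞] → [0,∞]` be strictly monotone and `ψ` a sense-reversing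
homeomorphism (order-reversing bijection with inverse `ψinv`).  Then the generalized
inverse of `φ ∘ ψ` equals `ψ⁻¹ ∘ φ⁻¹` everywhere on `[0,∞]`.  (If `φ` is strictly
increasing then `φ∘ψ` is non-increasing and `φ⁻¹` is the increasing-type inverse;
if `φ` is strictly decreasing then `φ∘ψ` is non-decreasing and `φ⁻¹` is the
decreasing-type inverse.) -/
theorem stmt3 (ψ ψinv φ : ℝ≥0∞ → ℝ≥0∞)
    (hψ : StrictAnti ψ) (hψbij : Function.Bijective ψ)
    (hψc : Continuous ψ) (hψinvc : Continuous ψinv)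
    (hleft : Function.LeftInverse ψinv ψ) (hright : Function.RightInverse ψinv ψ)
    (hφ : StrictMono φ ∨ StrictAnti φ) :
    (StrictMono φ → ∀ τ : ℝ≥0∞, decInv (fun t => φ (ψ t)) τ = ψinv (incInv φ τ)) ∧
    (StrictAnti φ → ∀ τ : ℝ≥0∞, incInv (fun t => φ (ψ t)) τ = ψinv (decInv φ τ)) := by
  constructor
  · intro hm τ
    have h1 : decInv (fun t => φ (ψ t)) τ = sInf (ψ ⁻¹' {s | φ s ≤ τ}) := rfl
    rw [h1, invSupInf ψ ψinv hψ hleft hright, supInfMono φ hm τ]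
    rfl
  · intro hm τ
    have h1 : incInv (fun t => φ (ψ t)) τ = sInf (ψ ⁻¹' {s | τ ≤ φ s}) := rfl
    rw [h1, invSupInf ψ ψinv hψ hleft hright, supInfAnti φ hm τ]
    rfl
end

section
/- Let Φ : [1,∞) → [1,∞) be a locally integrable function with ∫₁^∞ log Φ(t) dt/t² = ∞. Then limsup_{t→∞} Φ(t)/t^λ = ∞ for every real λ. -/
open ENNReal MeasureTheory Set Filter Real

/-- Let `Φ : [1,∞) → [1,∞)` be locally integrable with
`∫₁^∞ log Φ(t) dt/t² = ∞`.  Then `limsup_{t→∞} Φ(t)/t^λ = ∞` for every real `λ`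
(expressed as: for every `λ` and every constant `c`, `Φ(t)/t^λ > c` frequently
as `t → ∞`). -/
theorem stmt13 (Φ : ℝ → ℝ) (hΦ1 : ∀ t ≥ 1, 1 ≤ Φ t)
    (hloc : LocallyIntegrableOn Φ (Ici 1))
    (hdiv : ∫⁻ t in Ioi (1:ℝ), ENNReal.ofReal (Real.log (Φ t) / t ^ 2) = ∞) :
    ∀ lam c : ℝ, ∃ᶠ t in atTop, c < Φ t / t ^ lam := by
  intro lam c
  by_contra hfreq
  rw [not_frequently] at hfreq
  simp only [not_lt] at hfreq
  obtain ⟨A₀, hA₀⟩ := eventually_atTop.mp hfreq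
  set A := max A₀ 2 with hAdef
  have hA2 : (2:ℝ) ≤ A := le_max_right _ _
  have hA1 : (1:ℝ) ≤ A := by linarith
  have hA0 : (0:ℝ) < A := by linarith
  have hbound : ∀ t ≥ A, Φ t ≤ c * t ^ lam := by
    intro t ht
    have h1 : (1:ℝ) ≤ t := le_trans hA1 ht
    have h0 : (0:ℝ) < t := by linarith
    have hd := hA₀ t (le_trans (le_max_left _ _) ht)
    have hpow : 0 < t ^ lam := Real.rpow_pos_of_pos h0 lam
    calc Φ t = (Φ t / t ^ lam) * t ^ lam := by field_simp
    _ ≤ c * t ^ lam := mul_le_mul_of_nonneg_right hd hpow.le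
  have hc : 0 < c := by
    have h1 := hbound A le_rfl
    have h2 := hΦ1 A hA1
    have hpow : 0 < A ^ lam := Real.rpow_pos_of_pos hA0 lam
    nlinarith
  set M := |Real.log c| + |lam| + 1 with hMdef
  have hM : 0 < M := by positivity
  -- pointwise bound on Ioi A
  have key : ∀ t ∈ Ioi A, ENNReal.ofReal (Real.log (Φ t) / t ^ 2)
      ≤ ENNReal.ofReal (3 * M * t ^ (-(3/2) : ℝ)) := by
    intro t ht
    have h1 : (1:ℝ) ≤ t := le_of_lt (lt_of_le_of_lt hA1 ht)
    have h0 : (0:ℝ) < t := by linarith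
    apply ENNReal.ofReal_le_ofReal
    have hlogt : 0 ≤ Real.log t := Real.log_nonneg h1
    have hΦpos : 0 < Φ t := lt_of_lt_of_le one_pos (hΦ1 t h1)
    have hlog1 : Real.log (Φ t) ≤ Real.log c + lam * Real.log t := by
      have := Real.log_le_log hΦpos (hbound t (le_of_lt ht))
      rwa [Real.log_mul (ne_of_gt hc) (ne_of_gt (Real.rpow_pos_of_pos h0 lam)),
        Real.log_rpow h0] at this
    have hlog2 : Real.log (Φ t) ≤ M * (1 + Real.log t) := by
      have ha : Real.log c ≤ |Real.log c| := le_abs_self _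
      have hb : lam ≤ |lam| := le_abs_self _
      nlinarith [abs_nonneg (Real.log c), abs_nonneg lam,
        mul_le_mul_of_nonneg_right hb hlogt]
    have hsqrt1 : (1:ℝ) ≤ t ^ ((1:ℝ)/2) := Real.one_le_rpow h1 (by norm_num)
    have hsqrt2 : Real.log t ≤ t ^ ((1:ℝ)/2) / ((1:ℝ)/2) :=
      Real.log_le_rpow_div h0.le (by norm_num)
    have hlog3 : Real.log (Φ t) ≤ 3 * M * t ^ ((1:ℝ)/2) := by
      have : (1:ℝ) + Real.log t ≤ 3 * t ^ ((1:ℝ)/2) := by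
        have : Real.log t ≤ 2 * t ^ ((1:ℝ)/2) := by linarith [hsqrt2]
        linarith
      nlinarith [hM.le]
    have ht2 : (0:ℝ) < t ^ 2 := by positivity
    have heq : 3 * M * t ^ ((1:ℝ)/2) / t ^ 2 = 3 * M * t ^ (-(3/2) : ℝ) := by
      rw [mul_div_assoc]
      congr 1
      rw [show (t:ℝ) ^ 2 = t ^ ((2:ℕ):ℝ) from (Real.rpow_natCast t 2).symm,
        ← Real.rpow_sub h0]
      norm_num
    calc Real.log (Φ t) / t ^ 2 ≤ 3 * M * t ^ ((1:ℝ)/2) / t ^ 2 := by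
          gcongr
    _ = 3 * M * t ^ (-(3/2) : ℝ) := heq
  -- finiteness on Ioi A
  have fin2 : ∫⁻ t in Ioi A, ENNReal.ofReal (Real.log (Φ t) / t ^ 2) < ∞ := by
    have hint : IntegrableOn (fun t : ℝ => 3 * M * t ^ (-(3/2) : ℝ)) (Ioi A) :=
      (integrableOn_Ioi_rpow_of_lt (by norm_num) hA0).const_mul _
    calc ∫⁻ t in Ioi A, ENNReal.ofReal (Real.log (Φ t) / t ^ 2)
        ≤ ∫⁻ t in Ioi A, ENNReal.ofReal (3 * M * t ^ (-(3/2) : ℝ)) := by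
          refine setLIntegral_mono_ae ?_ (Filter.Eventually.of_forall ?_)
          · exact (Measurable.aemeasurable (by fun_prop))
          · intro t; exact fun ht => key t ht
    _ ≤ ∫⁻ t in Ioi A, ‖3 * M * t ^ (-(3/2) : ℝ)‖ₑ := by
          refine lintegral_mono fun t => ?_
          rw [Real.enorm_eq_ofReal_abs]
          exact ENNReal.ofReal_le_ofReal (le_abs_self _)
    _ < ∞ := hint.2
  -- finiteness on Ioc 1 A
  have fin1 : ∫⁻ t in Ioc 1 A, ENNReal.ofReal (Real.log (Φ t) / t ^ 2) < ∞ := by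
    have hint : IntegrableOn Φ (Icc 1 A) :=
      hloc.integrableOn_compact_subset Icc_subset_Ici_self isCompact_Icc
    calc ∫⁻ t in Ioc 1 A, ENNReal.ofReal (Real.log (Φ t) / t ^ 2)
        ≤ ∫⁻ t in Icc 1 A, ENNReal.ofReal (Real.log (Φ t) / t ^ 2) :=
          lintegral_mono_set Ioc_subset_Icc_self
    _ ≤ ∫⁻ t in Icc 1 A, ‖Φ t‖ₑ := by
          refine setLIntegral_mono_ae hint.aestronglyMeasurable.aemeasurable.enorm
            (Filter.Eventually.of_forall ?_)
          intro t ht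
          have h1 : (1:ℝ) ≤ t := ht.1
          have hΦt := hΦ1 t h1
          have hlognn : 0 ≤ Real.log (Φ t) := Real.log_nonneg hΦt
          have hlogle : Real.log (Φ t) ≤ Φ t := by
            have := Real.log_le_sub_one_of_pos (lt_of_lt_of_le one_pos hΦt)
            linarith
          have ht2 : (1:ℝ) ≤ t ^ 2 := by nlinarith
          have : Real.log (Φ t) / t ^ 2 ≤ Φ t :=
            le_trans (div_le_self hlognn ht2) hlogle
          rw [Real.enorm_eq_ofReal_abs]
          exact ENNReal.ofReal_le_ofReal (le_trans this (le_abs_self _))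
    _ < ∞ := hint.2
  -- combine
  have hsplit : Ioi (1:ℝ) = Ioc 1 A ∪ Ioi A := (Ioc_union_Ioi_eq_Ioi hA1).symm
  rw [hsplit, lintegral_union measurableSet_Ioi (Ioc_disjoint_Ioi le_rfl)] at hdiv
  exact absurd hdiv (ne_of_lt (ENNReal.add_lt_top.mpr ⟨fin1, fin2⟩))
end

section
/- There exists a continuous, strictly increasing, convex function Φ : [1,∞) → [1,∞) such that ∫₁^∞ log Φ(t) dt/t² = ∞, liminf_{t→∞} (log Φ(t))/(log t) = 1, and Φ(t) ≥ t for all t ≥ 1. In particular, for no λ > 1, Cλ > 0, Tλ ≥ 1 does Φ(t) ≥ Cλ t^λ hold for all t ≥ Tλ. -/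
open ENNReal MeasureTheory Set Filter Real

noncomputable def TT : ℕ → ℝ
  | 0 => 1
  | n + 1 => Real.exp ((n + 1) * (1 + Real.exp 1 * TT n))

lemma TT_one_le : ∀ n, 1 ≤ TT n := by
  intro n
  cases n with
  | zero => simp [TT]
  | succ n =>
    have h1 : 1 ≤ TT n := TT_one_le n
    have he : (1:ℝ) ≤ Real.exp 1 := by
      have := Real.add_one_le_exp (1:ℝ); linarith
    have : (0:ℝ) ≤ (n + 1 : ℝ) * (1 + Real.exp 1 * TT n) := by positivity
    calc (1:ℝ) = Real.exp 0 := by simp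
    _ ≤ _ := Real.exp_le_exp.mpr this

lemma TT_log (n : ℕ) : Real.log (TT (n+1)) = (n + 1) * (1 + Real.exp 1 * TT n) := by
  simp [TT, Real.log_exp]

lemma TT_succ_ge (n : ℕ) : 2 * TT n + 1 ≤ TT (n + 1) := by
  have h1 : 1 ≤ TT n := TT_one_le n
  have he : (2.7182818283 : ℝ) < Real.exp 1 := Real.exp_one_gt_d9
  have key : (n + 1 : ℝ) * (1 + Real.exp 1 * TT n) + 1 ≤ TT (n+1) := by
    have := Real.add_one_le_exp ((n + 1 : ℝ) * (1 + Real.exp 1 * TT n))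
    simpa [TT] using this
  have hn : (1:ℝ) ≤ (n+1:ℝ) := by exact_mod_cast Nat.one_le_iff_ne_zero.mpr (Nat.succ_ne_zero n)
  nlinarith [mul_le_mul hn (le_refl (1 + Real.exp 1 * TT n)) (by positivity) (by positivity)]

lemma TT_mono : StrictMono TT := by
  apply strictMono_nat_of_lt_succ
  intro n
  have := TT_succ_ge n
  have := TT_one_le n
  linarith

lemma TT_ge_nat (n : ℕ) : (n : ℝ) ≤ TT n := by
  induction n with
  | zero => simp [TT]
  | succ n ih =>
    have := TT_succ_ge n
    have := TT_one_le n
    push_cast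
    linarith

lemma TT1_ge : (4:ℝ) ≤ TT 1 := by
  have he : (2.7182818283 : ℝ) < Real.exp 1 := Real.exp_one_gt_d9
  have h1 : TT 1 = Real.exp (1 * (1 + Real.exp 1 * 1)) := by simp [TT]
  have h2 := Real.add_one_le_exp ((1:ℝ) * (1 + Real.exp 1 * 1))
  rw [h1]
  linarith

lemma TT_ge_four {n : ℕ} (hn : 1 ≤ n) : (4:ℝ) ≤ TT n :=
  le_trans TT1_ge (TT_mono.monotone hn)

-- e * TT n ≥ 2 * (TT n + 1)  for n ≥ 1
lemma TT_interval {n : ℕ} (hn : 1 ≤ n) : 2 * (TT n + 1) ≤ Real.exp 1 * TT n := by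
  have he : (2.7182818283 : ℝ) < Real.exp 1 := Real.exp_one_gt_d9
  have h4 := TT_ge_four hn
  nlinarith

lemma TT_ex (s : ℝ) : ∃ n, s < TT (n + 1) := by
  obtain ⟨n, hn⟩ := exists_nat_gt s
  exact ⟨n, lt_of_lt_of_le hn (by
    have h1 := TT_ge_nat (n+1)
    push_cast at h1
    linarith)⟩

open Classical in
noncomputable def idx (s : ℝ) : ℕ := Nat.find (TT_ex s)

lemma idx_spec (s : ℝ) : s < TT (idx s + 1) := by
  classical
  exact Nat.find_spec (TT_ex s)

lemma idx_le {s : ℝ} {n : ℕ} (h : s < TT (n + 1)) : idx s ≤ n := by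
  classical
  exact Nat.find_le h

lemma idx_mono : Monotone idx := by
  intro s u hsu
  exact idx_le (lt_of_le_of_lt hsu (idx_spec u))

lemma idx_ge {s : ℝ} {n : ℕ} (h : TT n ≤ s) : n ≤ idx s := by
  by_contra hc
  push_neg at hc
  have : idx s + 1 ≤ n := hc
  have := TT_mono.monotone this
  have := idx_spec s
  linarith

noncomputable def hh (s : ℝ) : ℝ :=
  if s < 1 then 1 else min s (Real.exp 1 * TT (idx s))

lemma hh_ge_one (s : ℝ) : 1 ≤ hh s := by
  unfold hh
  split
  · exact le_refl 1
  · next hs =>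
    push_neg at hs
    refine le_min hs ?_
    have h1 := TT_one_le (idx s)
    have he : (1:ℝ) ≤ Real.exp 1 := by have := Real.add_one_le_exp (1:ℝ); linarith
    nlinarith

lemma hh_mono : Monotone hh := by
  intro s u hsu
  unfold hh
  split
  · split
    · exact le_refl 1
    · next hu =>
      push_neg at hu
      refine le_min hu ?_
      have h1 := TT_one_le (idx u)
      have he : (1:ℝ) ≤ Real.exp 1 := by have := Real.add_one_le_exp (1:ℝ); linarith
      nlinarith
  · next hs =>
    push_neg at hs
    have hu : ¬ u < 1 := by push_neg; linarith
    rw [if_neg hu]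
    have : TT (idx s) ≤ TT (idx u) := TT_mono.monotone (idx_mono hsu)
    have he : (0:ℝ) < Real.exp 1 := Real.exp_pos 1
    exact min_le_min hsu (by nlinarith)

-- h s = s on [TT n, e * TT n]
lemma hh_eq_self {n : ℕ} {s : ℝ} (h1 : TT n ≤ s) (h2 : s ≤ Real.exp 1 * TT n) : hh s = s := by
  have hs1 : (1:ℝ) ≤ s := le_trans (TT_one_le n) h1
  unfold hh
  rw [if_neg (by push_neg; exact hs1)]
  have : n ≤ idx s := idx_ge h1
  have : TT n ≤ TT (idx s) := TT_mono.monotone this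
  have he : (0:ℝ) < Real.exp 1 := Real.exp_pos 1
  exact min_eq_left (le_trans h2 (by nlinarith))

-- h s ≤ e * TT k  when s < TT (k+1)
lemma hh_le {k : ℕ} {s : ℝ} (h : s < TT (k + 1)) : hh s ≤ Real.exp 1 * TT k := by
  unfold hh
  have h1 := TT_one_le k
  have he : (1:ℝ) ≤ Real.exp 1 := by have := Real.add_one_le_exp (1:ℝ); linarith
  split
  · nlinarith
  · have hik : idx s ≤ k := idx_le h
    have : TT (idx s) ≤ TT k := TT_mono.monotone hik
    have he0 : (0:ℝ) < Real.exp 1 := Real.exp_pos 1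
    exact le_trans (min_le_right _ _) (by nlinarith)

noncomputable def ff (s : ℝ) : ℝ := 2 * Real.exp (hh s)

lemma ff_mono : Monotone ff := fun s u h => by
  unfold ff
  have := hh_mono h
  nlinarith [Real.exp_le_exp.mpr this, Real.exp_pos (hh s)]

lemma ff_ge_two (s : ℝ) : 2 ≤ ff s := by
  unfold ff
  nlinarith [Real.exp_le_exp.mpr (le_trans zero_le_one (hh_ge_one s)), Real.exp_zero]

lemma ff_intble (a b : ℝ) : IntervalIntegrable ff MeasureTheory.volume a b :=
  ff_mono.intervalIntegrable

noncomputable def Phi (t : ℝ) : ℝ := 1 + ∫ s in (1:ℝ)..t, ff s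

lemma Phi_cont : Continuous Phi :=
  continuous_const.add (intervalIntegral.continuous_primitive ff_intble 1)

lemma Phi_sub (s t : ℝ) : Phi t - Phi s = ∫ u in s..t, ff u := by
  unfold Phi
  have := intervalIntegral.integral_add_adjacent_intervals (ff_intble 1 s) (ff_intble s t)
  linarith

lemma Phi_strictMono : StrictMono Phi := by
  intro s t hst
  have h1 : (t - s) * 2 ≤ ∫ u in s..t, ff u := by
    have := intervalIntegral.integral_mono_on hst.le (intervalIntegrable_const (c := (2:ℝ)))
      (ff_intble s t) (fun x _ => ff_ge_two x)
    simpa using this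
  have := Phi_sub s t
  nlinarith

lemma Phi_ge (t : ℝ) (ht : 1 ≤ t) : 2 * t - 1 ≤ Phi t := by
  have h1 : (t - 1) * 2 ≤ ∫ u in (1:ℝ)..t, ff u := by
    have := intervalIntegral.integral_mono_on ht (intervalIntegrable_const (c := (2:ℝ)))
      (ff_intble 1 t) (fun x _ => ff_ge_two x)
    simpa using this
  unfold Phi
  linarith

lemma Phi_convex_aux {x y a b : ℝ} (hxy : x ≤ y) (ha : 0 ≤ a) (hb : 0 ≤ b)
    (hab : a + b = 1) : Phi (a * x + b * y) ≤ a * Phi x + b * Phi y := by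
  set m := a * x + b * y with hm
  have hx' : a * x + b * x = x := by rw [← add_mul, hab, one_mul]
  have hy' : a * y + b * y = y := by rw [← add_mul, hab, one_mul]
  have hbyx : 0 ≤ b * (y - x) := mul_nonneg hb (by linarith)
  have hayx : 0 ≤ a * (y - x) := mul_nonneg ha (by linarith)
  have hxm : x ≤ m := by rw [hm]; nlinarith
  have hmy : m ≤ y := by rw [hm]; nlinarith
  have hms : m - x = b * (y - x) := by rw [hm]; linear_combination x * hab
  have hym : y - m = a * (y - x) := by rw [hm]; linear_combination -y * hab
  have h1 : Phi m - Phi x ≤ b * (y - x) * ff m := by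
    rw [← hms, Phi_sub]
    have := intervalIntegral.integral_mono_on hxm (ff_intble x m)
      (intervalIntegrable_const (c := ff m)) (fun u hu => ff_mono hu.2)
    simpa [mul_comm] using this
  have h2 : a * (y - x) * ff m ≤ Phi y - Phi m := by
    rw [← hym, Phi_sub]
    have := intervalIntegral.integral_mono_on hmy
      (intervalIntegrable_const (c := ff m)) (ff_intble m y) (fun u hu => ff_mono hu.1)
    simpa [mul_comm] using this
  have hPm : a * Phi m + b * Phi m = Phi m := by rw [← add_mul, hab, one_mul]
  nlinarith [mul_le_mul_of_nonneg_left h1 ha, mul_le_mul_of_nonneg_left h2 hb]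

lemma Phi_convex : ConvexOn ℝ (Set.Ici 1) Phi := by
  refine ⟨convex_Ici 1, ?_⟩
  intro x _ y _ a b ha hb hab
  simp only [smul_eq_mul]
  rcases le_total x y with hxy | hxy
  · exact Phi_convex_aux hxy ha hb hab
  · have := Phi_convex_aux hxy hb ha (by linarith)
    calc Phi (a * x + b * y) = Phi (b * y + a * x) := by ring_nf
    _ ≤ b * Phi y + a * Phi x := this
    _ = a * Phi x + b * Phi y := by ring

-- exp lower bound: for TT n + 1 ≤ t ≤ e * TT n, exp t ≤ Phi t
lemma Phi_exp_lb {n : ℕ} {t : ℝ} (h1 : TT n + 1 ≤ t) (h2 : t ≤ Real.exp 1 * TT n) :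
    Real.exp t ≤ Phi t := by
  have hTn1 : (1:ℝ) ≤ TT n := TT_one_le n
  have hTt : TT n ≤ t := by linarith
  -- Phi t - Phi (TT n) = ∫_{TT n}^t ff ≥ ∫ 2 exp s = 2 (exp t - exp (TT n))
  have key : 2 * (Real.exp t - Real.exp (TT n)) ≤ Phi t - Phi (TT n) := by
    rw [Phi_sub]
    have heq : ∫ s in (TT n)..t, 2 * Real.exp s = 2 * (Real.exp t - Real.exp (TT n)) := by
      rw [intervalIntegral.integral_const_mul, integral_exp]
    rw [← heq]
    apply intervalIntegral.integral_mono_on hTt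
      ((continuous_const.mul Real.continuous_exp).intervalIntegrable _ _) (ff_intble _ _)
    intro u hu
    have hu1 : TT n ≤ u := hu.1
    have hu2 : u ≤ Real.exp 1 * TT n := le_trans hu.2 h2
    unfold ff
    rw [hh_eq_self hu1 hu2]
    rfl
  have hPhiT : 0 ≤ Phi (TT n) - 1 := by
    have := Phi_ge (TT n) hTn1
    linarith
  -- exp (TT n) ≤ exp (t - 1) = exp t / e
  have hexp : Real.exp (TT n) * Real.exp 1 ≤ Real.exp t := by
    rw [← Real.exp_add]
    exact Real.exp_le_exp.mpr (by linarith)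
  have he : (2.7182818283 : ℝ) < Real.exp 1 := Real.exp_one_gt_d9
  have hepos : (0:ℝ) < Real.exp (TT n) := Real.exp_pos _
  -- 2(exp t - exp(TT n)) ≥ 2 exp t (1 - 1/e) ≥ exp t
  nlinarith [Real.exp_pos t]

-- upper bound: Phi (TT (k+1)) ≤ 2 * exp (e * TT k) * TT (k+1)
lemma Phi_ub (k : ℕ) :
    Phi (TT (k+1)) ≤ 2 * Real.exp (Real.exp 1 * TT k) * TT (k+1) := by
  set B := TT (k+1) with hB
  have hB1 : (1:ℝ) ≤ B := TT_one_le (k+1)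
  set M := 2 * Real.exp (Real.exp 1 * TT k) with hM
  have hM1 : (2:ℝ) ≤ M := by
    have h0 : (0:ℝ) ≤ Real.exp 1 * TT k := mul_nonneg (Real.exp_pos 1).le (by linarith [TT_one_le k])
    have h1 : Real.exp 0 ≤ Real.exp (Real.exp 1 * TT k) := Real.exp_le_exp.mpr h0
    rw [Real.exp_zero] at h1
    nlinarith
  have key : ∫ s in (1:ℝ)..B, ff s ≤ (B - 1) * M := by
    rw [intervalIntegral.integral_of_le hB1, MeasureTheory.integral_Ioc_eq_integral_Ioo]
    have hint : MeasureTheory.IntegrableOn ff (Set.Ioo (1:ℝ) B) := by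
      exact ((intervalIntegrable_iff_integrableOn_Ioc_of_le hB1).mp (ff_intble 1 B)).mono_set
        Set.Ioo_subset_Ioc_self
    have h1 : ∫ s in Set.Ioo (1:ℝ) B, ff s ≤ ∫ _s in Set.Ioo (1:ℝ) B, M := by
      apply MeasureTheory.setIntegral_mono_on hint (MeasureTheory.integrableOn_const
        (by rw [Real.volume_Ioo]; exact ENNReal.ofReal_ne_top)) measurableSet_Ioo
      intro s hs
      have hsB : s < TT (k + 1) := hs.2
      have := hh_le hsB
      unfold ff
      rw [hM]
      have := Real.exp_le_exp.mpr this
      linarith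
    have h2 : ∫ _s in Set.Ioo (1:ℝ) B, (M:ℝ) = (B - 1) * M := by
      rw [MeasureTheory.setIntegral_const, Real.volume_real_Ioo, smul_eq_mul,
        max_eq_left (by linarith)]
    linarith
  unfold Phi
  nlinarith

lemma Phi_pos {t : ℝ} (ht : 1 ≤ t) : 0 < Phi t := by
  have := Phi_ge t ht; linarith

lemma ratio_ub (k : ℕ) :
    Real.log (Phi (TT (k+1))) / Real.log (TT (k+1)) ≤ 1 + 1/(k+1) := by
  set X := Real.exp 1 * TT k with hX
  have hX0 : (0:ℝ) < X := mul_pos (Real.exp_pos 1) (by linarith [TT_one_le k])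
  have hT1 : (1:ℝ) ≤ TT (k+1) := TT_one_le (k+1)
  have hL : Real.log (TT (k+1)) = (k+1) * (1 + X) := by
    rw [TT_log k]
  have hLpos : 0 < Real.log (TT (k+1)) := by rw [hL]; positivity
  have hlog2 : Real.log 2 < 1 := by
    have := Real.log_two_lt_d9; linarith
  have h1 : Real.log (Phi (TT (k+1))) ≤ Real.log 2 + X + Real.log (TT (k+1)) := by
    have hle := Phi_ub k
    have h2 : Real.log (Phi (TT (k+1))) ≤ Real.log (2 * Real.exp X * TT (k+1)) :=
      Real.log_le_log (Phi_pos hT1) hle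
    rw [Real.log_mul (by positivity) (by linarith), Real.log_mul (by norm_num)
      (Real.exp_ne_zero X), Real.log_exp] at h2
    linarith
  rw [div_le_iff₀ hLpos]
  have hk1 : (0:ℝ) < (k:ℝ)+1 := by positivity
  have : (1 + 1/((k:ℝ)+1)) * Real.log (TT (k+1)) = Real.log (TT (k+1)) + (1 + X) := by
    rw [hL]; field_simp
  push_cast
  push_cast at this
  rw [this]
  linarith

lemma ratio_ev_ge : ∀ᶠ t in Filter.atTop, 1 ≤ Real.log (Phi t) / Real.log t := by
  filter_upwards [Filter.eventually_ge_atTop (2:ℝ)] with t ht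
  have ht1 : (1:ℝ) < t := by linarith
  have hlt : 0 < Real.log t := Real.log_pos ht1
  have : Real.log t ≤ Real.log (Phi t) := Real.log_le_log (by linarith)
    (by have := Phi_ge t ht1.le; linarith)
  rw [le_div_iff₀ hlt]; linarith

lemma ratio_freq (m : ℕ) : ∃ᶠ t in Filter.atTop,
    Real.log (Phi t) / Real.log t ≤ 1 + 1/(m+1) := by
  rw [Filter.frequently_atTop]
  intro b
  obtain ⟨j, hj⟩ := exists_nat_gt b
  refine ⟨TT (max m j + 1), ?_, ?_⟩
  · have h1 : (max m j : ℝ) + 1 ≤ TT (max m j + 1) := by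
      have := TT_ge_nat (max m j + 1); push_cast at this ⊢; linarith
    have : (j:ℝ) ≤ (max m j : ℝ) := by exact_mod_cast le_max_right m j
    linarith
  · refine le_trans (ratio_ub (max m j)) ?_
    have h1 : (m:ℝ) + 1 ≤ (max m j : ℝ) + 1 := by
      have : (m:ℝ) ≤ (max m j : ℝ) := by exact_mod_cast le_max_left m j
      linarith
    have h2 : (0:ℝ) < (m:ℝ)+1 := by positivity
    have := one_div_le_one_div_of_le h2 h1
    push_cast
    linarith

lemma ratio_liminf : Filter.liminf (fun t => Real.log (Phi t) / Real.log t) Filter.atTop = 1 := by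
  have hbdd : Filter.IsBoundedUnder (· ≥ ·) Filter.atTop
      (fun t => Real.log (Phi t) / Real.log t) :=
    Filter.isBoundedUnder_of_eventually_ge ratio_ev_ge
  have hcob : Filter.IsCoboundedUnder (· ≥ ·) Filter.atTop
      (fun t => Real.log (Phi t) / Real.log t) :=
    Filter.IsCoboundedUnder.of_frequently_le (ratio_freq 0)
  refine le_antisymm ?_ (Filter.le_liminf_of_le hcob ratio_ev_ge)
  have key : ∀ m : ℕ, Filter.liminf (fun t => Real.log (Phi t) / Real.log t) Filter.atTop
      ≤ 1 + 1/(m+1) := fun m => Filter.liminf_le_of_frequently_le (ratio_freq m) hbdd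
  have htend : Filter.Tendsto (fun m : ℕ => 1 + 1/((m:ℝ)+1)) Filter.atTop (nhds 1) := by
    have := tendsto_one_div_add_atTop_nhds_zero_nat (𝕜 := ℝ)
    have h2 := Filter.Tendsto.add (tendsto_const_nhds (x := (1:ℝ)) (f := Filter.atTop)) this
    simpa using h2
  exact ge_of_tendsto' htend key

noncomputable def gmeas : ℝ → ℝ≥0∞ := fun t => ENNReal.ofReal (Real.log (Phi t) / t ^ 2)

lemma interval_lb {n : ℕ} (hn : 1 ≤ n) :
    ENNReal.ofReal (Real.log 2) ≤
      ∫⁻ t in Set.Ioc (TT n + 1) (2 * (TT n + 1)), gmeas t := by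
  set a := TT n + 1 with ha
  have hT4 : (4:ℝ) ≤ TT n := TT_ge_four hn
  have ha0 : (0:ℝ) < a := by linarith
  have hab : a ≤ 2 * a := by linarith
  -- pointwise bound on Ioc a (2a)
  have hpt : ∀ t ∈ Set.Ioc a (2*a), ENNReal.ofReal (1/t) ≤ gmeas t := by
    intro t ht
    have ht1 : a < t := ht.1
    have ht2 : t ≤ 2 * a := ht.2
    have hte : t ≤ Real.exp 1 * TT n := le_trans ht2 (TT_interval hn)
    have hexp : Real.exp t ≤ Phi t := Phi_exp_lb (le_of_lt ht1) hte
    have ht0 : (0:ℝ) < t := by linarith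
    have hPp : 0 < Phi t := Phi_pos (by linarith)
    have hlog : t ≤ Real.log (Phi t) := (Real.le_log_iff_exp_le hPp).mpr hexp
    apply ENNReal.ofReal_le_ofReal
    rw [div_le_div_iff₀ ht0 (by positivity), one_mul]
    nlinarith
  have hmono : ∫⁻ t in Set.Ioc a (2*a), ENNReal.ofReal (1/t) ≤
      ∫⁻ t in Set.Ioc a (2*a), gmeas t :=
    MeasureTheory.setLIntegral_mono' measurableSet_Ioc hpt
  refine le_trans (le_of_eq ?_) hmono
  -- compute ∫⁻ ofReal (1/t) over Ioc a (2a)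
  have hinte : MeasureTheory.IntegrableOn (fun t : ℝ => 1/t) (Set.Ioc a (2*a)) := by
    apply MeasureTheory.IntegrableOn.mono_set _ Set.Ioc_subset_Icc_self
    apply ContinuousOn.integrableOn_Icc
    apply ContinuousOn.div continuousOn_const continuousOn_id
    intro x hx
    have h1 := hx.1
    simp only [id_eq]
    intro h; rw [h] at h1; linarith
  rw [← MeasureTheory.ofReal_integral_eq_lintegral_ofReal hinte ?_]
  · congr 1
    rw [← intervalIntegral.integral_of_le hab, integral_one_div ?_]
    · congr 1
      field_simp
    · intro hmem
      rw [Set.uIcc_of_le hab] at hmem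
      have := hmem.1; linarith
  · rw [Filter.EventuallyLE, MeasureTheory.ae_restrict_iff' measurableSet_Ioc]
    filter_upwards with t ht
    have h1 := ht.1
    have h2 : (0:ℝ) < t := by linarith
    positivity

lemma int_accum : ∀ N : ℕ, 1 ≤ N →
    (N : ℝ≥0∞) * ENNReal.ofReal (Real.log 2) ≤
      ∫⁻ t in Set.Ioc (TT 1 + 1) (2 * (TT N + 1)), gmeas t := by
  intro N
  induction N with
  | zero => intro h; exact absurd h (by norm_num)
  | succ N ih =>
    intro _
    rcases Nat.eq_zero_or_pos N with hN0 | hNpos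
    · subst hN0
      simpa using interval_lb (le_refl 1)
    · have hstep := interval_lb (Nat.le_succ_of_le hNpos)
      have hIH := ih hNpos
      have hTmono : TT N < TT (N+1) := TT_mono (Nat.lt_succ_self N)
      have hTsucc := TT_succ_ge N
      have hT1N : TT 1 ≤ TT N := TT_mono.monotone hNpos
      have hdisj : Disjoint (Set.Ioc (TT 1 + 1) (2 * (TT N + 1)))
          (Set.Ioc (TT (N+1) + 1) (2 * (TT (N+1) + 1))) := by
        apply Set.disjoint_left.mpr
        rintro t ⟨_, ht2⟩ ⟨ht3, _⟩
        linarith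
      have hsub : Set.Ioc (TT 1 + 1) (2 * (TT N + 1)) ∪
          Set.Ioc (TT (N+1) + 1) (2 * (TT (N+1) + 1)) ⊆
          Set.Ioc (TT 1 + 1) (2 * (TT (N+1) + 1)) := by
        rintro t (ht | ht)
        · exact ⟨ht.1, by linarith [ht.2]⟩
        · exact ⟨by linarith [ht.1], ht.2⟩
      calc ((N+1 : ℕ) : ℝ≥0∞) * ENNReal.ofReal (Real.log 2)
          = (N : ℝ≥0∞) * ENNReal.ofReal (Real.log 2) + ENNReal.ofReal (Real.log 2) := by
            push_cast; ring
        _ ≤ (∫⁻ t in Set.Ioc (TT 1 + 1) (2 * (TT N + 1)), gmeas t) +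
            ∫⁻ t in Set.Ioc (TT (N+1) + 1) (2 * (TT (N+1) + 1)), gmeas t :=
            add_le_add hIH hstep
        _ = ∫⁻ t in Set.Ioc (TT 1 + 1) (2 * (TT N + 1)) ∪
            Set.Ioc (TT (N+1) + 1) (2 * (TT (N+1) + 1)), gmeas t :=
            (MeasureTheory.lintegral_union measurableSet_Ioc hdisj).symm
        _ ≤ _ := MeasureTheory.lintegral_mono_set hsub

lemma int_infinite : ∫⁻ t in Set.Ioi (1:ℝ), gmeas t = ∞ := by
  by_contra h
  have hlt : ∫⁻ t in Set.Ioi (1:ℝ), gmeas t < ∞ := lt_top_iff_ne_top.mpr h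
  have hlog2 : (0:ℝ) < Real.log 2 := Real.log_pos (by norm_num)
  have hbound : ∀ N : ℕ, 1 ≤ N → (N : ℝ) * Real.log 2 ≤
      (∫⁻ t in Set.Ioi (1:ℝ), gmeas t).toReal := by
    intro N hN
    have h1 := int_accum N hN
    have hsub : Set.Ioc (TT 1 + 1) (2 * (TT N + 1)) ⊆ Set.Ioi (1:ℝ) := by
      intro t ht
      have := TT_one_le 1
      exact lt_of_le_of_lt (by linarith) ht.1
    have h2 : (N : ℝ≥0∞) * ENNReal.ofReal (Real.log 2) ≤ ∫⁻ t in Set.Ioi (1:ℝ), gmeas t :=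
      le_trans h1 (MeasureTheory.lintegral_mono_set hsub)
    have h3 : ENNReal.ofReal ((N : ℝ) * Real.log 2) ≤ ∫⁻ t in Set.Ioi (1:ℝ), gmeas t := by
      rw [ENNReal.ofReal_mul (by positivity), ENNReal.ofReal_natCast]; exact h2
    calc (N:ℝ) * Real.log 2 = (ENNReal.ofReal ((N : ℝ) * Real.log 2)).toReal := by
          rw [ENNReal.toReal_ofReal (by positivity)]
      _ ≤ _ := ENNReal.toReal_mono h (by exact h3)
  obtain ⟨N, hN⟩ := exists_nat_gt ((∫⁻ t in Set.Ioi (1:ℝ), gmeas t).toReal / Real.log 2)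
  have hN1 : 1 ≤ N + 1 := Nat.le_add_left 1 N
  have := hbound (N+1) hN1
  rw [div_lt_iff₀ hlog2] at hN
  have hNN : (N:ℝ) ≤ (N+1:ℕ) := by push_cast; linarith
  nlinarith [mul_le_mul_of_nonneg_right hNN hlog2.le]

/-- There exists a continuous, strictly increasing, convex function
`Φ : [1,∞) → [1,∞)` such that `∫₁^∞ log Φ(t) dt/t² = ∞`,
`liminf_{t→∞} (log Φ(t))/(log t) = 1`, and `Φ(t) ≥ t` for all `t ≥ 1`.
In particular, for no `λ > 1`, `C > 0`, `T ≥ 1` does `Φ(t) ≥ C t^λ` hold for all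
`t ≥ T`. -/
theorem stmt15 :
    ∃ Φ : ℝ → ℝ,
      ContinuousOn Φ (Ici 1) ∧
      StrictMonoOn Φ (Ici 1) ∧
      ConvexOn ℝ (Ici 1) Φ ∧
      (∀ t ≥ (1:ℝ), 1 ≤ Φ t) ∧
      (∀ t ≥ (1:ℝ), t ≤ Φ t) ∧
      (∫⁻ t in Ioi (1:ℝ), ENNReal.ofReal (Real.log (Φ t) / t ^ 2) = ∞) ∧
      Filter.liminf (fun t => Real.log (Φ t) / Real.log t) atTop = 1 ∧
      ¬ ∃ lam : ℝ, 1 < lam ∧ ∃ C : ℝ, 0 < C ∧ ∃ T : ℝ, 1 ≤ T ∧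
          ∀ t ≥ T, C * t ^ lam ≤ Φ t := by
  refine ⟨Phi, Phi_cont.continuousOn, Phi_strictMono.strictMonoOn _, Phi_convex,
    fun t ht => by have := Phi_ge t ht; linarith,
    fun t ht => by have := Phi_ge t ht; linarith,
    int_infinite, ratio_liminf, ?_⟩
  rintro ⟨lam, hlam, C, hC, T, hT, hbound⟩
  set r := fun t => Real.log (Phi t) / Real.log t with hr
  have hcob : Filter.IsCoboundedUnder (· ≥ ·) Filter.atTop r :=
    Filter.IsCoboundedUnder.of_frequently_le (ratio_freq 0)
  have hlt : Filter.liminf r Filter.atTop < (1 + lam)/2 := by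
    rw [ratio_liminf]; linarith
  have hfreq : ∃ᶠ t in Filter.atTop, r t < (1 + lam)/2 :=
    Filter.frequently_lt_of_liminf_lt hcob hlt
  have hev : ∀ᶠ t in Filter.atTop,
      T ≤ t ∧ 2 ≤ t ∧ (-Real.log C) / ((lam - 1)/2) < Real.log t := by
    have h1 : Filter.Tendsto Real.log Filter.atTop Filter.atTop := Real.tendsto_log_atTop
    filter_upwards [Filter.eventually_ge_atTop T, Filter.eventually_ge_atTop (2:ℝ),
      h1.eventually_gt_atTop ((-Real.log C) / ((lam - 1)/2))] with t h2 h3 h4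
    exact ⟨h2, h3, h4⟩
  obtain ⟨t, hrt, htT, ht2, hlogt⟩ := (hfreq.and_eventually hev).exists
  have ht1 : (1:ℝ) < t := by linarith
  have hlogt0 : 0 < Real.log t := Real.log_pos ht1
  have ht0 : (0:ℝ) < t := by linarith
  have hPb : C * t ^ lam ≤ Phi t := hbound t htT
  have hrpow : (0:ℝ) < t ^ lam := Real.rpow_pos_of_pos ht0 lam
  have hlogPhi : Real.log C + lam * Real.log t ≤ Real.log (Phi t) := by
    have := Real.log_le_log (by positivity) hPb
    rwa [Real.log_mul (ne_of_gt hC) (ne_of_gt hrpow), Real.log_rpow ht0] at this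
  have hup : Real.log (Phi t) < (1 + lam)/2 * Real.log t := by
    have := hrt
    rw [hr] at this
    simp only at this
    rwa [div_lt_iff₀ hlogt0] at this
  have hkey : -Real.log C < (lam - 1)/2 * Real.log t := by
    rw [div_lt_iff₀ (by linarith : (0:ℝ) < (lam - 1)/2)] at hlogt
    linarith
  nlinarith
end
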